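/- Let d ≥ 1, let M ⊆ P([d]) be non-empty, and let A be an order-d lattice subset. Suppose there exists a non-empty C ⊆ [d] and a C-subspace S such that the C*-covering number of A ∩ S is at least cov_M(A) + 1, where C* = {C \ {j} : j ∈ C}. Then every minimal-length M-covering decomposition of A (i.e., every tuple of M-subspaces S₁, …, S_k with k = cov_M(A) and A ⊆ S₁ ∪ ⋯ ∪ S_k) contains some S_i with S ⊆ S_i. -/
import Mathlib


open Finset

/-- A `B`-subspace of `[n₁]×⋯×[n_d]`: the set of points agreeing with some point `u`
on all coordinates outside `B`. -/
def IsBSubspace {d : ℕ} (n : Fin d → ℕ) (B : Finset (Fin d))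
    (S : Set (∀ j, Fin (n j))) : Prop :=
  ∃ u : ∀ j, Fin (n j), S = {x | ∀ j ∉ B, x j = u j}

/-- An `M`-subspace: a `B`-subspace for some `B ∈ M`. -/
def IsMSubspace {d : ℕ} (n : Fin d → ℕ) (M : Finset (Finset (Fin d)))
    (S : Set (∀ j, Fin (n j))) : Prop :=
  ∃ B ∈ M, IsBSubspace n B S

/-- The `M`-covering number: the least `k` such that `A` is covered by `k` `M`-subspaces. -/
noncomputable def covM {d : ℕ} (n : Fin d → ℕ) (M : Finset (Finset (Fin d)))
    (A : Set (∀ j, Fin (n j))) : ℕ :=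
  sInf {k | ∃ S : Fin k → Set (∀ j, Fin (n j)),
    (∀ i, IsMSubspace n M (S i)) ∧ A ⊆ ⋃ i, S i}

theorem forced_subspace_in_minimal_decomposition {d : ℕ} (hd : 0 < d)
    (n : Fin d → ℕ) (hn : ∀ j, 0 < n j)
    (M : Finset (Finset (Fin d))) (hM : M.Nonempty)
    (A : Set (∀ j, Fin (n j)))
    (C : Finset (Fin d)) (hC : C.Nonempty)
    (S : Set (∀ j, Fin (n j))) (hS : IsBSubspace n C S)
    (hrich : covM n M A + 1 ≤ covM n (C.image fun j => C.erase j) (A ∩ S)) :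
    ∀ Ss : Fin (covM n M A) → Set (∀ j, Fin (n j)),
      (∀ i, IsMSubspace n M (Ss i)) → A ⊆ ⋃ i, Ss i → ∃ i, S ⊆ Ss i := by
  intro Ss hSs hcov
  by_contra hno
  push_neg at hno
  obtain ⟨v, rfl⟩ := hS
  obtain ⟨j₀, hj₀⟩ := hC
  have key : ∀ i, ∃ T, IsMSubspace n (C.image fun j => C.erase j) T ∧
      Ss i ∩ {x | ∀ j ∉ C, x j = v j} ⊆ T := by
    intro i
    obtain ⟨B, hB, u, hu⟩ := hSs i
    by_cases hne : (Ss i ∩ {x | ∀ j ∉ C, x j = v j}).Nonempty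
    · obtain ⟨w, hw1, hw2⟩ := hne
      rw [hu] at hw1
      have hCB : ¬ C ⊆ B := by
        intro hCB
        apply hno i
        intro x hx
        rw [hu]
        intro j hj
        have hjC : j ∉ C := fun hc => hj (hCB hc)
        rw [hx j hjC, ← hw2 j hjC, hw1 j hj]
      obtain ⟨j, hjC, hjB⟩ := Finset.not_subset.mp hCB
      refine ⟨{x | ∀ l ∉ C.erase j, x l = w l},
        ⟨C.erase j, Finset.mem_image_of_mem _ hjC, w, rfl⟩, ?_⟩
      rintro x ⟨hx1, hx2⟩ l hl
      rw [hu] at hx1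
      by_cases hlC : l ∈ C
      · have hlj : l = j := by
          by_contra hne'
          exact hl (Finset.mem_erase.mpr ⟨hne', hlC⟩)
        subst hlj
        rw [hx1 l hjB, hw1 l hjB]
      · rw [hx2 l hlC, hw2 l hlC]
    · rw [Set.not_nonempty_iff_eq_empty] at hne
      refine ⟨{x | ∀ l ∉ C.erase j₀, x l = v l},
        ⟨C.erase j₀, Finset.mem_image_of_mem _ hj₀, v, rfl⟩, ?_⟩
      rw [hne]
      exact Set.empty_subset _
  choose T hT1 hT2 using key
  have hle : covM n (C.image fun j => C.erase j)
      (A ∩ {x | ∀ j ∉ C, x j = v j}) ≤ covM n M A := by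
    apply Nat.sInf_le
    refine ⟨T, hT1, ?_⟩
    rintro x ⟨hxA, hxS⟩
    obtain ⟨_, ⟨i, rfl⟩, hxi⟩ := hcov hxA
    exact Set.mem_iUnion.mpr ⟨i, hT2 i ⟨hxi, hxS⟩⟩
  exact Nat.not_succ_le_self _ (hrich.trans hle)
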